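/- For n ≥ 6, the positive co-degree Turán number of C5^- satisfies co^+ex(n, C5^-) = floor(n/3); that is, the maximum of δ2^+(H) over all n-vertex C5^--free non-empty 3-graphs H equals floor(n/3). -/

import Mathlib

open Finset

/-- The link (co-neighborhood) of the pair `{u,v}`: all `w` with `{u,v,w}` an edge. -/
def link {n : ℕ} (E : Finset (Finset (Fin n))) (u v : Fin n) : Finset (Fin n) :=
  Finset.univ.filter (fun w => ({u, v, w} : Finset (Fin n)) ∈ E)

/-- `E` is the edge set of a 3-graph: every edge has exactly 3 vertices. -/
def isEdgeSet {n : ℕ} (E : Finset (Finset (Fin n))) : Prop := ∀ e ∈ E, e.card = 3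

/-- `E` contains a copy of `C5⁻ = {abc, bcd, cde, dea}`. -/
def hasC5minus {n : ℕ} (E : Finset (Finset (Fin n))) : Prop :=
  ∃ a b c d e : Fin n,
    a ≠ b ∧ a ≠ c ∧ a ≠ d ∧ a ≠ e ∧ b ≠ c ∧ b ≠ d ∧ b ≠ e ∧ c ≠ d ∧ c ≠ e ∧ d ≠ e ∧
    ({a, b, c} : Finset (Fin n)) ∈ E ∧ ({b, c, d} : Finset (Fin n)) ∈ E ∧
    ({c, d, e} : Finset (Fin n)) ∈ E ∧ ({d, e, a} : Finset (Fin n)) ∈ E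

/-- `E` contains a copy of `C5 = {abc, bcd, cde, dea, eab}`. -/
def hasC5 {n : ℕ} (E : Finset (Finset (Fin n))) : Prop :=
  ∃ a b c d e : Fin n,
    a ≠ b ∧ a ≠ c ∧ a ≠ d ∧ a ≠ e ∧ b ≠ c ∧ b ≠ d ∧ b ≠ e ∧ c ≠ d ∧ c ≠ e ∧ d ≠ e ∧
    ({a, b, c} : Finset (Fin n)) ∈ E ∧ ({b, c, d} : Finset (Fin n)) ∈ E ∧
    ({c, d, e} : Finset (Fin n)) ∈ E ∧ ({d, e, a} : Finset (Fin n)) ∈ E ∧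
    ({e, a, b} : Finset (Fin n)) ∈ E

/-- `a, b, c, d` form a `K4` in `E`: all four triples among them are edges. -/
def isK4 {n : ℕ} (E : Finset (Finset (Fin n))) (a b c d : Fin n) : Prop :=
  a ≠ b ∧ a ≠ c ∧ a ≠ d ∧ b ≠ c ∧ b ≠ d ∧ c ≠ d ∧
  ({a, b, c} : Finset (Fin n)) ∈ E ∧ ({a, b, d} : Finset (Fin n)) ∈ E ∧
  ({a, c, d} : Finset (Fin n)) ∈ E ∧ ({b, c, d} : Finset (Fin n)) ∈ E

/-- `E` contains a copy of `K4⁻ = {abc, abd, acd}`. -/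
def hasK4minus {n : ℕ} (E : Finset (Finset (Fin n))) : Prop :=
  ∃ a b c d : Fin n, a ≠ b ∧ a ≠ c ∧ a ≠ d ∧ b ≠ c ∧ b ≠ d ∧ c ≠ d ∧
    ({a, b, c} : Finset (Fin n)) ∈ E ∧ ({a, b, d} : Finset (Fin n)) ∈ E ∧
    ({a, c, d} : Finset (Fin n)) ∈ E

/-- `A`-set of a `K4`: intersection of the three pairwise links of `{x, y, z}`
(the set `A_w` for the fourth vertex `w` of the `K4`). -/
def Aset {n : ℕ} (E : Finset (Finset (Fin n))) (x y z : Fin n) : Finset (Fin n) :=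
  link E x y ∩ link E y z ∩ link E z x

/-- `B`-set of a `K4`: `B_w = N(w,x) ∩ N(w,y) ∩ N(w,z)`. -/
def Bset {n : ℕ} (E : Finset (Finset (Fin n))) (w x y z : Fin n) : Finset (Fin n) :=
  link E w x ∩ link E w y ∩ link E w z

section helpers
variable {n : ℕ} {E : Finset (Finset (Fin n))}

lemma t_swap01 (a b c : Fin n) : ({a,b,c} : Finset (Fin n)) = {b,a,c} :=
  Finset.insert_comm a b {c}

lemma t_swap12 (a b c : Fin n) : ({a,b,c} : Finset (Fin n)) = {a,c,b} := by
  rw [Finset.pair_comm b c]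

lemma t_rot (a b c : Fin n) : ({a,b,c} : Finset (Fin n)) = {c,a,b} :=
  (t_swap12 a b c).trans (t_swap01 a c b)

lemma t_rot2 (a b c : Fin n) : ({a,b,c} : Finset (Fin n)) = {b,c,a} :=
  (t_swap01 a b c).trans (t_swap12 b a c)

lemma t_swap02 (a b c : Fin n) : ({a,b,c} : Finset (Fin n)) = {c,b,a} :=
  (t_rot a b c).trans (t_swap12 c a b)

lemma mem_link {u v w : Fin n} : w ∈ link E u v ↔ ({u,v,w} : Finset (Fin n)) ∈ E := by
  simp [link]

lemma pm {a b c x y z : Fin n} (h : ({a,b,c}:Finset (Fin n)) ∈ E)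
    (hp : ({x,y,z} : Finset (Fin n)) = {a,b,c}) : ({x,y,z}:Finset (Fin n)) ∈ E := hp ▸ h

lemma edge_ne (hE : isEdgeSet E) {u v w : Fin n} (h : ({u,v,w}:Finset (Fin n)) ∈ E) :
    u ≠ v ∧ u ≠ w ∧ v ≠ w := by
  have h3 := hE _ h
  refine ⟨?_, ?_, ?_⟩ <;> rintro rfl
  · rw [show ({u,u,w}:Finset (Fin n)) = {u,w} from Finset.insert_idem u {w}] at h3
    have := Finset.card_insert_le u ({w}:Finset (Fin n)); simp at this; omega
  · rw [t_swap12 u v u, show ({u,u,v}:Finset (Fin n)) = {u,v} from Finset.insert_idem u {v}] at h3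
    have := Finset.card_insert_le u ({v}:Finset (Fin n)); simp at this; omega
  · rw [Finset.insert_eq_self.mpr (Finset.mem_singleton_self v)] at h3
    have := Finset.card_insert_le u ({v}:Finset (Fin n)); simp at this; omega

lemma link_comm (u v : Fin n) : link E u v = link E v u := by
  ext w
  simp only [link, Finset.mem_filter, Finset.mem_univ, true_and]
  rw [t_swap01 u v w]

lemma no_cyc (h5 : ¬ hasC5minus E) {a b c d e : Fin n}
    (n1 : a ≠ b) (n2 : a ≠ c) (n3 : a ≠ d) (n4 : a ≠ e) (n5 : b ≠ c) (n6 : b ≠ d)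
    (n7 : b ≠ e) (n8 : c ≠ d) (n9 : c ≠ e) (n10 : d ≠ e)
    (e1 : ({a,b,c}:Finset (Fin n)) ∈ E) (e2 : ({b,c,d}:Finset (Fin n)) ∈ E)
    (e3 : ({c,d,e}:Finset (Fin n)) ∈ E) (e4 : ({d,e,a}:Finset (Fin n)) ∈ E) : False :=
  h5 ⟨a,b,c,d,e,n1,n2,n3,n4,n5,n6,n7,n8,n9,n10,e1,e2,e3,e4⟩

lemma shareCase (hE : isEdgeSet E) (h5 : ¬ hasC5minus E) {p q r s e : Fin n}
    (hpr : p ≠ r) (hps : p ≠ s) (hes : e ≠ s)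
    (h1 : e ∈ link E p q) (h2 : e ∈ link E q r)
    (hqrs : ({q,r,s}:Finset (Fin n)) ∈ E) (hprs : ({p,r,s}:Finset (Fin n)) ∈ E) : False := by
  rw [mem_link] at h1 h2
  obtain ⟨hpq, hpe, hqe⟩ := edge_ne hE h1
  obtain ⟨hqr, _, hre⟩ := edge_ne hE h2
  obtain ⟨_, hqs, hrs⟩ := edge_ne hE hqrs
  exact no_cyc h5 hpe hpq hpr hps hqe.symm hre.symm hes hqr hqs hrs
    (pm h1 (t_swap12 p e q)) (pm h2 (t_rot2 e q r)) hqrs (pm hprs (t_rot r s p))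

lemma oppCase (hE : isEdgeSet E) (h5 : ¬ hasC5minus E) {p q r s e : Fin n}
    (hpr : p ≠ r) (hps : p ≠ s)
    (h1 : e ∈ link E p q) (h2 : e ∈ link E r s)
    (hpqr : ({p,q,r}:Finset (Fin n)) ∈ E) (hqrs : ({q,r,s}:Finset (Fin n)) ∈ E) : False := by
  rw [mem_link] at h1 h2
  obtain ⟨hpq, hpe, hqe⟩ := edge_ne hE h1
  obtain ⟨hrs, hre, hse⟩ := edge_ne hE h2
  obtain ⟨_, hqs, _⟩ := edge_ne hE hqrs
  obtain ⟨_, _, hqr⟩ := edge_ne hE hpqr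
  exact no_cyc h5 hpe.symm hqe.symm hre.symm hse.symm hpq hpr hps hqr hqs hrs
    (pm h1 (t_rot2 e p q)) hpqr hqrs h2

lemma three_count {S1 S2 S3 U : Finset (Fin n)} (h1 : S1 ⊆ U) (h2 : S2 ⊆ U) (h3 : S3 ⊆ U)
    (d12 : Disjoint S1 S2) (d13 : Disjoint S1 S3) (d23 : Disjoint S2 S3) :
    S1.card + S2.card + S3.card ≤ U.card := by
  have D : Disjoint (S1 ∪ S2) S3 := by rw [Finset.disjoint_union_left]; exact ⟨d13, d23⟩
  have h := Finset.card_le_card (Finset.union_subset (Finset.union_subset h1 h2) h3)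
  rwa [Finset.card_union_of_disjoint D, Finset.card_union_of_disjoint d12] at h

lemma six_count {S1 S2 S3 S4 S5 S6 U : Finset (Fin n)}
    (h1 : S1 ⊆ U) (h2 : S2 ⊆ U) (h3 : S3 ⊆ U) (h4 : S4 ⊆ U) (h5 : S5 ⊆ U) (h6 : S6 ⊆ U)
    (d12 : Disjoint S1 S2) (d13 : Disjoint S1 S3) (d14 : Disjoint S1 S4)
    (d15 : Disjoint S1 S5) (d16 : Disjoint S1 S6)
    (d23 : Disjoint S2 S3) (d24 : Disjoint S2 S4) (d25 : Disjoint S2 S5) (d26 : Disjoint S2 S6)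
    (d34 : Disjoint S3 S4) (d35 : Disjoint S3 S5) (d36 : Disjoint S3 S6)
    (d45 : Disjoint S4 S5) (d46 : Disjoint S4 S6) (d56 : Disjoint S5 S6) :
    S1.card + S2.card + S3.card + S4.card + S5.card + S6.card ≤ U.card := by
  have D3 : Disjoint (S1 ∪ S2) S3 := by rw [Finset.disjoint_union_left]; exact ⟨d13, d23⟩
  have D4 : Disjoint (S1 ∪ S2 ∪ S3) S4 := by
    rw [Finset.disjoint_union_left, Finset.disjoint_union_left]; exact ⟨⟨d14, d24⟩, d34⟩
  have D5 : Disjoint (S1 ∪ S2 ∪ S3 ∪ S4) S5 := by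
    rw [Finset.disjoint_union_left, Finset.disjoint_union_left, Finset.disjoint_union_left]
    exact ⟨⟨⟨d15, d25⟩, d35⟩, d45⟩
  have D6 : Disjoint (S1 ∪ S2 ∪ S3 ∪ S4 ∪ S5) S6 := by
    rw [Finset.disjoint_union_left, Finset.disjoint_union_left, Finset.disjoint_union_left,
      Finset.disjoint_union_left]
    exact ⟨⟨⟨⟨d16, d26⟩, d36⟩, d46⟩, d56⟩
  have h := Finset.card_le_card (Finset.union_subset (Finset.union_subset (Finset.union_subset
    (Finset.union_subset (Finset.union_subset h1 h2) h3) h4) h5) h6)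
  rwa [Finset.card_union_of_disjoint D6, Finset.card_union_of_disjoint D5,
    Finset.card_union_of_disjoint D4, Finset.card_union_of_disjoint D3,
    Finset.card_union_of_disjoint d12] at h

lemma sdiff3_card {x y z : Fin n} (hxy : x ≠ y) (hxz : x ≠ z) (hyz : y ≠ z) :
    ((Finset.univ : Finset (Fin n)) \ {x,y,z}).card = n - 3 := by
  rw [Finset.card_sdiff_of_subset (Finset.subset_univ _), Finset.card_univ, Fintype.card_fin,
    Finset.card_eq_three.mpr ⟨x,y,z,hxy,hxz,hyz,rfl⟩]

lemma sdiff4_card {a b c d : Fin n} (hab : a ≠ b) (hac : a ≠ c) (had : a ≠ d)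
    (hbc : b ≠ c) (hbd : b ≠ d) (hcd : c ≠ d) :
    ((Finset.univ : Finset (Fin n)) \ {a,b,c,d}).card = n - 4 := by
  have h3 : ({b,c,d}:Finset (Fin n)).card = 3 := Finset.card_eq_three.mpr ⟨b,c,d,hbc,hbd,hcd,rfl⟩
  rw [Finset.card_sdiff_of_subset (Finset.subset_univ _), Finset.card_univ, Fintype.card_fin,
    Finset.card_insert_of_notMem (by simp [hab, hac, had]), h3]

end helpers

section main
variable {n : ℕ} {E : Finset (Finset (Fin n))}

lemma exists_K4minus (hn : 6 ≤ n) (hE : isEdgeSet E) (hne : E.Nonempty)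
    (hδ : ∀ u v : Fin n, (link E u v).Nonempty → n/3 + 1 ≤ (link E u v).card) :
    ∃ a b c d : Fin n, a ≠ b ∧ a ≠ c ∧ a ≠ d ∧ b ≠ c ∧ b ≠ d ∧ c ≠ d ∧
      ({a,b,c}:Finset (Fin n)) ∈ E ∧ ({a,b,d}:Finset (Fin n)) ∈ E ∧
      ({a,c,d}:Finset (Fin n)) ∈ E := by
  obtain ⟨t, ht⟩ := hne
  obtain ⟨x, y, z, hxy, hxz, hyz, rfl⟩ := Finset.card_eq_three.mp (hE t ht)
  by_cases h12 : ((link E x y \ {z}) ∩ (link E y z \ {x})).Nonempty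
  · obtain ⟨w, hw⟩ := h12
    rw [Finset.mem_inter, Finset.mem_sdiff, Finset.mem_sdiff] at hw
    obtain ⟨⟨hw1, hwz⟩, hw2, hwx⟩ := hw
    rw [Finset.mem_singleton] at hwz hwx
    rw [mem_link] at hw1 hw2
    obtain ⟨_, hxw, hyw⟩ := edge_ne hE hw1
    exact ⟨y, x, z, w, hxy.symm, hyz, hyw, hxz, hxw, Ne.symm hwz,
      pm ht (t_swap01 y x z), pm hw1 (t_swap01 y x w), hw2⟩
  by_cases h13 : ((link E x y \ {z}) ∩ (link E x z \ {y})).Nonempty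
  · obtain ⟨w, hw⟩ := h13
    rw [Finset.mem_inter, Finset.mem_sdiff, Finset.mem_sdiff] at hw
    obtain ⟨⟨hw1, hwz⟩, hw2, hwy⟩ := hw
    rw [Finset.mem_singleton] at hwz hwy
    rw [mem_link] at hw1 hw2
    obtain ⟨_, hxw, hyw⟩ := edge_ne hE hw1
    exact ⟨x, y, z, w, hxy, hxz, hxw, hyz, Ne.symm hwy, Ne.symm hwz, ht, hw1, hw2⟩
  by_cases h23 : ((link E y z \ {x}) ∩ (link E x z \ {y})).Nonempty
  · obtain ⟨w, hw⟩ := h23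
    rw [Finset.mem_inter, Finset.mem_sdiff, Finset.mem_sdiff] at hw
    obtain ⟨⟨hw1, hwx⟩, hw2, hwy⟩ := hw
    rw [Finset.mem_singleton] at hwx hwy
    rw [mem_link] at hw1 hw2
    obtain ⟨_, _, hzw⟩ := edge_ne hE hw2
    exact ⟨z, x, y, w, hxz.symm, hyz.symm, hzw, hxy, Ne.symm hwx, Ne.symm hwy,
      pm ht (t_rot2 z x y), pm hw2 (t_swap01 z x w), pm hw1 (t_swap01 z y w)⟩
  exfalso
  have c1 : n/3 + 1 ≤ (link E x y).card := hδ x y ⟨z, mem_link.mpr ht⟩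
  have c2 : n/3 + 1 ≤ (link E y z).card := hδ y z ⟨x, mem_link.mpr (pm ht (t_rot y z x))⟩
  have c3 : n/3 + 1 ≤ (link E x z).card := hδ x z ⟨y, mem_link.mpr (pm ht (t_swap12 x z y))⟩
  have l1 := Finset.le_card_sdiff ({z}:Finset (Fin n)) (link E x y)
  have l2 := Finset.le_card_sdiff ({x}:Finset (Fin n)) (link E y z)
  have l3 := Finset.le_card_sdiff ({y}:Finset (Fin n)) (link E x z)
  rw [Finset.card_singleton] at l1 l2 l3
  have hsub1 : link E x y \ {z} ⊆ Finset.univ \ {x,y,z} := by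
    intro w hw
    rw [Finset.mem_sdiff] at hw ⊢
    obtain ⟨hw1, hwz⟩ := hw
    rw [Finset.mem_singleton] at hwz
    obtain ⟨_, hxw, hyw⟩ := edge_ne hE (mem_link.mp hw1)
    refine ⟨Finset.mem_univ _, ?_⟩
    simp only [Finset.mem_insert, Finset.mem_singleton, not_or]
    exact ⟨Ne.symm hxw, Ne.symm hyw, hwz⟩
  have hsub2 : link E y z \ {x} ⊆ Finset.univ \ {x,y,z} := by
    intro w hw
    rw [Finset.mem_sdiff] at hw ⊢
    obtain ⟨hw1, hwx⟩ := hw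
    rw [Finset.mem_singleton] at hwx
    obtain ⟨_, hyw, hzw⟩ := edge_ne hE (mem_link.mp hw1)
    refine ⟨Finset.mem_univ _, ?_⟩
    simp only [Finset.mem_insert, Finset.mem_singleton, not_or]
    exact ⟨hwx, Ne.symm hyw, Ne.symm hzw⟩
  have hsub3 : link E x z \ {y} ⊆ Finset.univ \ {x,y,z} := by
    intro w hw
    rw [Finset.mem_sdiff] at hw ⊢
    obtain ⟨hw1, hwy⟩ := hw
    rw [Finset.mem_singleton] at hwy
    obtain ⟨_, hxw, hzw⟩ := edge_ne hE (mem_link.mp hw1)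
    refine ⟨Finset.mem_univ _, ?_⟩
    simp only [Finset.mem_insert, Finset.mem_singleton, not_or]
    exact ⟨Ne.symm hxw, hwy, Ne.symm hzw⟩
  have d12 : Disjoint (link E x y \ {z}) (link E y z \ {x}) := by
    rw [Finset.disjoint_iff_inter_eq_empty]; exact Finset.not_nonempty_iff_eq_empty.mp h12
  have d13 : Disjoint (link E x y \ {z}) (link E x z \ {y}) := by
    rw [Finset.disjoint_iff_inter_eq_empty]; exact Finset.not_nonempty_iff_eq_empty.mp h13
  have d23 : Disjoint (link E y z \ {x}) (link E x z \ {y}) := by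
    rw [Finset.disjoint_iff_inter_eq_empty]; exact Finset.not_nonempty_iff_eq_empty.mp h23
  have hcount := three_count hsub1 hsub2 hsub3 d12 d13 d23
  rw [sdiff3_card hxy hxz hyz] at hcount
  omega

lemma bcd_edge (hn : 6 ≤ n) (hE : isEdgeSet E) (h5 : ¬ hasC5minus E)
    (hδ : ∀ u v : Fin n, (link E u v).Nonempty → n/3 + 1 ≤ (link E u v).card)
    {a b c d : Fin n} (hab : a ≠ b) (hac : a ≠ c) (had : a ≠ d) (hbc : b ≠ c)
    (hbd : b ≠ d) (hcd : c ≠ d)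
    (habc : ({a,b,c}:Finset (Fin n)) ∈ E) (habd : ({a,b,d}:Finset (Fin n)) ∈ E)
    (hacd : ({a,c,d}:Finset (Fin n)) ∈ E) : ({b,c,d}:Finset (Fin n)) ∈ E := by
  by_contra hbcd
  have c1 : n/3 + 1 ≤ (link E b c).card := hδ b c ⟨a, mem_link.mpr (pm habc (t_rot b c a))⟩
  have c2 : n/3 + 1 ≤ (link E b d).card := hδ b d ⟨a, mem_link.mpr (pm habd (t_rot b d a))⟩
  have c3 : n/3 + 1 ≤ (link E c d).card := hδ c d ⟨a, mem_link.mpr (pm hacd (t_rot c d a))⟩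
  have l1 := Finset.le_card_sdiff ({a}:Finset (Fin n)) (link E b c)
  have l2 := Finset.le_card_sdiff ({a}:Finset (Fin n)) (link E b d)
  have l3 := Finset.le_card_sdiff ({a}:Finset (Fin n)) (link E c d)
  rw [Finset.card_singleton] at l1 l2 l3
  have hsub1 : link E b c \ {a} ⊆ Finset.univ \ {a,b,c,d} := by
    intro w hw
    rw [Finset.mem_sdiff] at hw ⊢
    obtain ⟨hw1, hwa⟩ := hw
    rw [Finset.mem_singleton] at hwa
    rw [mem_link] at hw1
    obtain ⟨_, hbw, hcw⟩ := edge_ne hE hw1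
    have hwd : w ≠ d := by rintro rfl; exact hbcd hw1
    refine ⟨Finset.mem_univ _, ?_⟩
    simp only [Finset.mem_insert, Finset.mem_singleton, not_or]
    exact ⟨hwa, Ne.symm hbw, Ne.symm hcw, hwd⟩
  have hsub2 : link E b d \ {a} ⊆ Finset.univ \ {a,b,c,d} := by
    intro w hw
    rw [Finset.mem_sdiff] at hw ⊢
    obtain ⟨hw1, hwa⟩ := hw
    rw [Finset.mem_singleton] at hwa
    rw [mem_link] at hw1
    obtain ⟨_, hbw, hdw⟩ := edge_ne hE hw1
    have hwc : w ≠ c := by rintro rfl; exact hbcd (pm hw1 (t_swap12 b w d))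
    refine ⟨Finset.mem_univ _, ?_⟩
    simp only [Finset.mem_insert, Finset.mem_singleton, not_or]
    exact ⟨hwa, Ne.symm hbw, hwc, Ne.symm hdw⟩
  have hsub3 : link E c d \ {a} ⊆ Finset.univ \ {a,b,c,d} := by
    intro w hw
    rw [Finset.mem_sdiff] at hw ⊢
    obtain ⟨hw1, hwa⟩ := hw
    rw [Finset.mem_singleton] at hwa
    rw [mem_link] at hw1
    obtain ⟨_, hcw, hdw⟩ := edge_ne hE hw1
    have hwb : w ≠ b := by rintro rfl; exact hbcd (pm hw1 (t_rot2 w c d))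
    refine ⟨Finset.mem_univ _, ?_⟩
    simp only [Finset.mem_insert, Finset.mem_singleton, not_or]
    exact ⟨hwa, hwb, Ne.symm hcw, Ne.symm hdw⟩
  have d12 : Disjoint (link E b c \ {a}) (link E b d \ {a}) := by
    rw [Finset.disjoint_left]
    intro w hw1 hw2
    have hm1 := hsub1 hw1
    rw [Finset.mem_sdiff] at hm1
    obtain ⟨-, hwmem⟩ := hm1
    simp only [Finset.mem_insert, Finset.mem_singleton, not_or] at hwmem
    obtain ⟨hwa, hwb, hwc, hwd⟩ := hwmem
    rw [Finset.mem_sdiff, mem_link] at hw1 hw2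
    exact no_cyc h5 had.symm hcd.symm hbd.symm (Ne.symm hwd) hac hab (Ne.symm hwa)
      hbc.symm (Ne.symm hwc) (Ne.symm hwb)
      (pm hacd (t_rot2 d a c)) (pm habc (t_swap12 a c b))
      (pm hw1.1 (t_swap01 c b w)) (pm hw2.1 (t_swap12 b w d))
  have d13 : Disjoint (link E b c \ {a}) (link E c d \ {a}) := by
    rw [Finset.disjoint_left]
    intro w hw1 hw2
    have hm1 := hsub1 hw1
    rw [Finset.mem_sdiff] at hm1
    obtain ⟨-, hwmem⟩ := hm1
    simp only [Finset.mem_insert, Finset.mem_singleton, not_or] at hwmem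
    obtain ⟨hwa, hwb, hwc, hwd⟩ := hwmem
    rw [Finset.mem_sdiff, mem_link] at hw1 hw2
    exact no_cyc h5 had.symm hbd.symm hcd.symm (Ne.symm hwd) hab hac (Ne.symm hwa)
      hbc (Ne.symm hwb) (Ne.symm hwc)
      (pm habd (t_rot2 d a b)) habc hw1.1 (pm hw2.1 (t_swap12 c w d))
  have d23 : Disjoint (link E b d \ {a}) (link E c d \ {a}) := by
    rw [Finset.disjoint_left]
    intro w hw1 hw2
    have hm1 := hsub2 hw1
    rw [Finset.mem_sdiff] at hm1
    obtain ⟨-, hwmem⟩ := hm1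
    simp only [Finset.mem_insert, Finset.mem_singleton, not_or] at hwmem
    obtain ⟨hwa, hwb, hwc, hwd⟩ := hwmem
    rw [Finset.mem_sdiff, mem_link] at hw1 hw2
    exact no_cyc h5 hac.symm hbc.symm hcd (Ne.symm hwc) hab had (Ne.symm hwa)
      hbd (Ne.symm hwb) (Ne.symm hwd)
      (pm habc (t_rot2 c a b)) habd hw1.1 (pm hw2.1 (t_rot d w c))
  have hcount := three_count hsub1 hsub2 hsub3 d12 d13 d23
  rw [sdiff4_card hab hac had hbc hbd hcd] at hcount
  omega

lemma k4_false (hn : 6 ≤ n) (hE : isEdgeSet E) (h5 : ¬ hasC5minus E)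
    (hδ : ∀ u v : Fin n, (link E u v).Nonempty → n/3 + 1 ≤ (link E u v).card)
    {a b c d : Fin n} (hab : a ≠ b) (hac : a ≠ c) (had : a ≠ d) (hbc : b ≠ c)
    (hbd : b ≠ d) (hcd : c ≠ d)
    (habc : ({a,b,c}:Finset (Fin n)) ∈ E) (habd : ({a,b,d}:Finset (Fin n)) ∈ E)
    (hacd : ({a,c,d}:Finset (Fin n)) ∈ E) (hbcd : ({b,c,d}:Finset (Fin n)) ∈ E) :
    False := by
  have c1 : n/3 + 1 ≤ (link E a b).card := hδ a b ⟨c, mem_link.mpr habc⟩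
  have l1 := Finset.le_card_sdiff ({c,d}:Finset (Fin n)) (link E a b)
  have p1 : ({c,d}:Finset (Fin n)).card = 2 := by rw [Finset.card_insert_of_notMem (by simp [hcd]), Finset.card_singleton]
  rw [p1] at l1
  have hsub1 : link E a b \ {c,d} ⊆ Finset.univ \ {a,b,c,d} := by
    intro w hw
    rw [Finset.mem_sdiff] at hw ⊢
    obtain ⟨hw1, hw2⟩ := hw
    simp only [Finset.mem_insert, Finset.mem_singleton, not_or] at hw2
    obtain ⟨hwc, hwd⟩ := hw2
    obtain ⟨_, haw, hbw⟩ := edge_ne hE (mem_link.mp hw1)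
    refine ⟨Finset.mem_univ _, ?_⟩
    simp only [Finset.mem_insert, Finset.mem_singleton, not_or]
    exact ⟨Ne.symm haw, Ne.symm hbw, hwc, hwd⟩
  have c2 : n/3 + 1 ≤ (link E a c).card := hδ a c ⟨d, mem_link.mpr hacd⟩
  have l2 := Finset.le_card_sdiff ({b,d}:Finset (Fin n)) (link E a c)
  have p2 : ({b,d}:Finset (Fin n)).card = 2 := by rw [Finset.card_insert_of_notMem (by simp [hbd]), Finset.card_singleton]
  rw [p2] at l2
  have hsub2 : link E a c \ {b,d} ⊆ Finset.univ \ {a,b,c,d} := by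
    intro w hw
    rw [Finset.mem_sdiff] at hw ⊢
    obtain ⟨hw1, hw2⟩ := hw
    simp only [Finset.mem_insert, Finset.mem_singleton, not_or] at hw2
    obtain ⟨hwb, hwd⟩ := hw2
    obtain ⟨_, haw, hcw⟩ := edge_ne hE (mem_link.mp hw1)
    refine ⟨Finset.mem_univ _, ?_⟩
    simp only [Finset.mem_insert, Finset.mem_singleton, not_or]
    exact ⟨Ne.symm haw, hwb, Ne.symm hcw, hwd⟩
  have c3 : n/3 + 1 ≤ (link E a d).card := hδ a d ⟨c, mem_link.mpr (pm hacd (t_swap12 a d c))⟩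
  have l3 := Finset.le_card_sdiff ({b,c}:Finset (Fin n)) (link E a d)
  have p3 : ({b,c}:Finset (Fin n)).card = 2 := by rw [Finset.card_insert_of_notMem (by simp [hbc]), Finset.card_singleton]
  rw [p3] at l3
  have hsub3 : link E a d \ {b,c} ⊆ Finset.univ \ {a,b,c,d} := by
    intro w hw
    rw [Finset.mem_sdiff] at hw ⊢
    obtain ⟨hw1, hw2⟩ := hw
    simp only [Finset.mem_insert, Finset.mem_singleton, not_or] at hw2
    obtain ⟨hwb, hwc⟩ := hw2
    obtain ⟨_, haw, hdw⟩ := edge_ne hE (mem_link.mp hw1)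
    refine ⟨Finset.mem_univ _, ?_⟩
    simp only [Finset.mem_insert, Finset.mem_singleton, not_or]
    exact ⟨Ne.symm haw, hwb, hwc, Ne.symm hdw⟩
  have c4 : n/3 + 1 ≤ (link E b c).card := hδ b c ⟨a, mem_link.mpr (pm habc (t_rot b c a))⟩
  have l4 := Finset.le_card_sdiff ({a,d}:Finset (Fin n)) (link E b c)
  have p4 : ({a,d}:Finset (Fin n)).card = 2 := by rw [Finset.card_insert_of_notMem (by simp [had]), Finset.card_singleton]
  rw [p4] at l4
  have hsub4 : link E b c \ {a,d} ⊆ Finset.univ \ {a,b,c,d} := by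
    intro w hw
    rw [Finset.mem_sdiff] at hw ⊢
    obtain ⟨hw1, hw2⟩ := hw
    simp only [Finset.mem_insert, Finset.mem_singleton, not_or] at hw2
    obtain ⟨hwa, hwd⟩ := hw2
    obtain ⟨_, hbw, hcw⟩ := edge_ne hE (mem_link.mp hw1)
    refine ⟨Finset.mem_univ _, ?_⟩
    simp only [Finset.mem_insert, Finset.mem_singleton, not_or]
    exact ⟨hwa, Ne.symm hbw, Ne.symm hcw, hwd⟩
  have c5 : n/3 + 1 ≤ (link E b d).card := hδ b d ⟨a, mem_link.mpr (pm habd (t_rot b d a))⟩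
  have l5 := Finset.le_card_sdiff ({a,c}:Finset (Fin n)) (link E b d)
  have p5 : ({a,c}:Finset (Fin n)).card = 2 := by rw [Finset.card_insert_of_notMem (by simp [hac]), Finset.card_singleton]
  rw [p5] at l5
  have hsub5 : link E b d \ {a,c} ⊆ Finset.univ \ {a,b,c,d} := by
    intro w hw
    rw [Finset.mem_sdiff] at hw ⊢
    obtain ⟨hw1, hw2⟩ := hw
    simp only [Finset.mem_insert, Finset.mem_singleton, not_or] at hw2
    obtain ⟨hwa, hwc⟩ := hw2
    obtain ⟨_, hbw, hdw⟩ := edge_ne hE (mem_link.mp hw1)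
    refine ⟨Finset.mem_univ _, ?_⟩
    simp only [Finset.mem_insert, Finset.mem_singleton, not_or]
    exact ⟨hwa, Ne.symm hbw, hwc, Ne.symm hdw⟩
  have c6 : n/3 + 1 ≤ (link E c d).card := hδ c d ⟨a, mem_link.mpr (pm hacd (t_rot c d a))⟩
  have l6 := Finset.le_card_sdiff ({a,b}:Finset (Fin n)) (link E c d)
  have p6 : ({a,b}:Finset (Fin n)).card = 2 := by rw [Finset.card_insert_of_notMem (by simp [hab]), Finset.card_singleton]
  rw [p6] at l6
  have hsub6 : link E c d \ {a,b} ⊆ Finset.univ \ {a,b,c,d} := by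
    intro w hw
    rw [Finset.mem_sdiff] at hw ⊢
    obtain ⟨hw1, hw2⟩ := hw
    simp only [Finset.mem_insert, Finset.mem_singleton, not_or] at hw2
    obtain ⟨hwa, hwb⟩ := hw2
    obtain ⟨_, hcw, hdw⟩ := edge_ne hE (mem_link.mp hw1)
    refine ⟨Finset.mem_univ _, ?_⟩
    simp only [Finset.mem_insert, Finset.mem_singleton, not_or]
    exact ⟨hwa, hwb, Ne.symm hcw, Ne.symm hdw⟩
  have d12 : Disjoint (link E a b \ {c,d}) (link E a c \ {b,d}) := by
    rw [Finset.disjoint_left]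
    intro e he1 he2
    rw [Finset.mem_sdiff] at he1 he2
    obtain ⟨hl1, hx1⟩ := he1
    obtain ⟨hl2, hx2⟩ := he2
    simp only [Finset.mem_insert, Finset.mem_singleton, not_or] at hx1 hx2
    rw [link_comm a b] at hl1
    exact shareCase hE h5 hbc hbd hx1.2 hl1 hl2 hacd hbcd
  have d13 : Disjoint (link E a b \ {c,d}) (link E a d \ {b,c}) := by
    rw [Finset.disjoint_left]
    intro e he1 he2
    rw [Finset.mem_sdiff] at he1 he2
    obtain ⟨hl1, hx1⟩ := he1
    obtain ⟨hl2, hx2⟩ := he2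
    simp only [Finset.mem_insert, Finset.mem_singleton, not_or] at hx1 hx2
    rw [link_comm a b] at hl1
    exact shareCase hE h5 hbd hbc hx1.1 hl1 hl2 (pm hacd (t_swap12 a d c)) (pm hbcd (t_swap12 b d c))
  have d14 : Disjoint (link E a b \ {c,d}) (link E b c \ {a,d}) := by
    rw [Finset.disjoint_left]
    intro e he1 he2
    rw [Finset.mem_sdiff] at he1 he2
    obtain ⟨hl1, hx1⟩ := he1
    obtain ⟨hl2, hx2⟩ := he2
    simp only [Finset.mem_insert, Finset.mem_singleton, not_or] at hx1 hx2
    exact shareCase hE h5 hac had hx1.2 hl1 hl2 hbcd hacd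
  have d15 : Disjoint (link E a b \ {c,d}) (link E b d \ {a,c}) := by
    rw [Finset.disjoint_left]
    intro e he1 he2
    rw [Finset.mem_sdiff] at he1 he2
    obtain ⟨hl1, hx1⟩ := he1
    obtain ⟨hl2, hx2⟩ := he2
    simp only [Finset.mem_insert, Finset.mem_singleton, not_or] at hx1 hx2
    exact shareCase hE h5 had hac hx1.1 hl1 hl2 (pm hbcd (t_swap12 b d c)) (pm hacd (t_swap12 a d c))
  have d16 : Disjoint (link E a b \ {c,d}) (link E c d \ {a,b}) := by
    rw [Finset.disjoint_left]
    intro e he1 he2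
    rw [Finset.mem_sdiff] at he1 he2
    obtain ⟨hl1, hx1⟩ := he1
    obtain ⟨hl2, hx2⟩ := he2
    simp only [Finset.mem_insert, Finset.mem_singleton, not_or] at hx1 hx2
    exact oppCase hE h5 hac had hl1 hl2 habc hbcd
  have d23 : Disjoint (link E a c \ {b,d}) (link E a d \ {b,c}) := by
    rw [Finset.disjoint_left]
    intro e he1 he2
    rw [Finset.mem_sdiff] at he1 he2
    obtain ⟨hl1, hx1⟩ := he1
    obtain ⟨hl2, hx2⟩ := he2
    simp only [Finset.mem_insert, Finset.mem_singleton, not_or] at hx1 hx2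
    rw [link_comm a c] at hl1
    exact shareCase hE h5 hcd hbc.symm hx1.1 hl1 hl2 (pm habd (t_swap12 a d b)) (pm hbcd (t_rot c d b))
  have d24 : Disjoint (link E a c \ {b,d}) (link E b c \ {a,d}) := by
    rw [Finset.disjoint_left]
    intro e he1 he2
    rw [Finset.mem_sdiff] at he1 he2
    obtain ⟨hl1, hx1⟩ := he1
    obtain ⟨hl2, hx2⟩ := he2
    simp only [Finset.mem_insert, Finset.mem_singleton, not_or] at hx1 hx2
    rw [link_comm b c] at hl2
    exact shareCase hE h5 hab had hx1.2 hl1 hl2 (pm hbcd (t_swap01 c b d)) habd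
  have d25 : Disjoint (link E a c \ {b,d}) (link E b d \ {a,c}) := by
    rw [Finset.disjoint_left]
    intro e he1 he2
    rw [Finset.mem_sdiff] at he1 he2
    obtain ⟨hl1, hx1⟩ := he1
    obtain ⟨hl2, hx2⟩ := he2
    simp only [Finset.mem_insert, Finset.mem_singleton, not_or] at hx1 hx2
    exact oppCase hE h5 hab had hl1 hl2 (pm habc (t_swap12 a c b)) (pm hbcd (t_swap01 c b d))
  have d26 : Disjoint (link E a c \ {b,d}) (link E c d \ {a,b}) := by
    rw [Finset.disjoint_left]
    intro e he1 he2
    rw [Finset.mem_sdiff] at he1 he2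
    obtain ⟨hl1, hx1⟩ := he1
    obtain ⟨hl2, hx2⟩ := he2
    simp only [Finset.mem_insert, Finset.mem_singleton, not_or] at hx1 hx2
    exact shareCase hE h5 had hab hx1.1 hl1 hl2 (pm hbcd (t_rot c d b)) (pm habd (t_swap12 a d b))
  have d34 : Disjoint (link E a d \ {b,c}) (link E b c \ {a,d}) := by
    rw [Finset.disjoint_left]
    intro e he1 he2
    rw [Finset.mem_sdiff] at he1 he2
    obtain ⟨hl1, hx1⟩ := he1
    obtain ⟨hl2, hx2⟩ := he2
    simp only [Finset.mem_insert, Finset.mem_singleton, not_or] at hx1 hx2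
    exact oppCase hE h5 hab hac hl1 hl2 (pm habd (t_swap12 a d b)) (pm hbcd (t_rot2 d b c))
  have d35 : Disjoint (link E a d \ {b,c}) (link E b d \ {a,c}) := by
    rw [Finset.disjoint_left]
    intro e he1 he2
    rw [Finset.mem_sdiff] at he1 he2
    obtain ⟨hl1, hx1⟩ := he1
    obtain ⟨hl2, hx2⟩ := he2
    simp only [Finset.mem_insert, Finset.mem_singleton, not_or] at hx1 hx2
    rw [link_comm b d] at hl2
    exact shareCase hE h5 hab hac hx1.2 hl1 hl2 (pm hbcd (t_rot2 d b c)) habc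
  have d36 : Disjoint (link E a d \ {b,c}) (link E c d \ {a,b}) := by
    rw [Finset.disjoint_left]
    intro e he1 he2
    rw [Finset.mem_sdiff] at he1 he2
    obtain ⟨hl1, hx1⟩ := he1
    obtain ⟨hl2, hx2⟩ := he2
    simp only [Finset.mem_insert, Finset.mem_singleton, not_or] at hx1 hx2
    rw [link_comm c d] at hl2
    exact shareCase hE h5 hac hab hx1.1 hl1 hl2 (pm hbcd (t_swap02 d c b)) (pm habc (t_swap12 a c b))
  have d45 : Disjoint (link E b c \ {a,d}) (link E b d \ {a,c}) := by
    rw [Finset.disjoint_left]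
    intro e he1 he2
    rw [Finset.mem_sdiff] at he1 he2
    obtain ⟨hl1, hx1⟩ := he1
    obtain ⟨hl2, hx2⟩ := he2
    simp only [Finset.mem_insert, Finset.mem_singleton, not_or] at hx1 hx2
    rw [link_comm b c] at hl1
    exact shareCase hE h5 hcd hac.symm hx1.1 hl1 hl2 (pm habd (t_rot b d a)) (pm hacd (t_rot c d a))
  have d46 : Disjoint (link E b c \ {a,d}) (link E c d \ {a,b}) := by
    rw [Finset.disjoint_left]
    intro e he1 he2
    rw [Finset.mem_sdiff] at he1 he2
    obtain ⟨hl1, hx1⟩ := he1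
    obtain ⟨hl2, hx2⟩ := he2
    simp only [Finset.mem_insert, Finset.mem_singleton, not_or] at hx1 hx2
    exact shareCase hE h5 hbd hab.symm hx1.1 hl1 hl2 (pm hacd (t_rot c d a)) (pm habd (t_rot b d a))
  have d56 : Disjoint (link E b d \ {a,c}) (link E c d \ {a,b}) := by
    rw [Finset.disjoint_left]
    intro e he1 he2
    rw [Finset.mem_sdiff] at he1 he2
    obtain ⟨hl1, hx1⟩ := he1
    obtain ⟨hl2, hx2⟩ := he2
    simp only [Finset.mem_insert, Finset.mem_singleton, not_or] at hx1 hx2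
    rw [link_comm c d] at hl2
    exact shareCase hE h5 hbc hab.symm hx1.1 hl1 hl2 (pm hacd (t_swap02 d c a)) (pm habc (t_rot b c a))
  have hcount := six_count hsub1 hsub2 hsub3 hsub4 hsub5 hsub6 d12 d13 d14 d15 d16 d23 d24 d25 d26 d34 d35 d36 d45 d46 d56
  rw [sdiff4_card hab hac had hbc hbd hcd] at hcount
  omega

lemma upper_false (hn : 6 ≤ n) (hE : isEdgeSet E) (hne : E.Nonempty) (h5 : ¬ hasC5minus E)
    (hδ : ∀ u v : Fin n, (link E u v).Nonempty → n/3 + 1 ≤ (link E u v).card) : False := by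
  obtain ⟨a, b, c, d, hab, hac, had, hbc, hbd, hcd, habc, habd, hacd⟩ :=
    exists_K4minus hn hE hne hδ
  exact k4_false hn hE h5 hδ hab hac had hbc hbd hcd habc habd hacd
    (bcd_edge hn hE h5 hδ hab hac had hbc hbd hcd habc habd hacd)

end main


lemma class_card (n j : ℕ) (hn : 0 < n) (hj : j < 3) :
    n/3 ≤ (Finset.univ.filter (fun w : Fin n => (w:ℕ) % 3 = j)).card := by
  have key := Finset.card_le_card_of_injOn
    (f := fun i : ℕ => (⟨(3*i+j) % n, Nat.mod_lt _ hn⟩ : Fin n))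
    (s := Finset.range (n/3)) (t := Finset.univ.filter (fun w : Fin n => (w:ℕ) % 3 = j))
    ?_ ?_
  · simpa using key
  · intro i hi
    rw [Finset.mem_coe, Finset.mem_range] at hi
    have hlt : 3*i + j < n := by omega
    rw [Finset.mem_coe, Finset.mem_filter]
    refine ⟨Finset.mem_univ _, ?_⟩
    show ((3*i+j) % n) % 3 = j
    rw [Nat.mod_eq_of_lt hlt]
    omega
  · intro i1 hi1 i2 hi2 heq
    simp only [Finset.coe_range, Set.mem_Iio] at hi1 hi2
    have h1 : 3*i1 + j < n := by omega
    have h2 : 3*i2 + j < n := by omega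
    have hv := congrArg Fin.val heq
    simp only [] at hv
    rw [Nat.mod_eq_of_lt h1, Nat.mod_eq_of_lt h2] at hv
    omega

lemma construction (n : ℕ) (hn : 6 ≤ n) :
    ∃ E : Finset (Finset (Fin n)), isEdgeSet E ∧ E.Nonempty ∧ ¬ hasC5minus E ∧
      ∀ u v : Fin n, (link E u v).Nonempty → n / 3 ≤ (link E u v).card := by
  classical
  set F : Finset (Finset (Fin n)) := Finset.univ.filter (fun s : Finset (Fin n) =>
      s.card = 3 ∧ ∀ u ∈ s, ∀ v ∈ s, u ≠ v → (u:ℕ) % 3 ≠ (v:ℕ) % 3) with hF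
  have hEF : isEdgeSet F := by
    intro e he
    rw [hF, Finset.mem_filter] at he
    exact he.2.1
  refine ⟨F, hEF, ?_, ?_, ?_⟩
  · obtain ⟨x0, hx0⟩ : ∃ x : Fin n, (x:ℕ) = 0 := ⟨⟨0, by omega⟩, rfl⟩
    obtain ⟨x1, hx1⟩ : ∃ x : Fin n, (x:ℕ) = 1 := ⟨⟨1, by omega⟩, rfl⟩
    obtain ⟨x2, hx2⟩ : ∃ x : Fin n, (x:ℕ) = 2 := ⟨⟨2, by omega⟩, rfl⟩
    have h01 : x0 ≠ x1 := by intro h; rw [Fin.ext_iff, hx0, hx1] at h; omega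
    have h02 : x0 ≠ x2 := by intro h; rw [Fin.ext_iff, hx0, hx2] at h; omega
    have h12 : x1 ≠ x2 := by intro h; rw [Fin.ext_iff, hx1, hx2] at h; omega
    refine ⟨{x0, x1, x2}, ?_⟩
    rw [hF, Finset.mem_filter]
    refine ⟨Finset.mem_univ _, Finset.card_eq_three.mpr ⟨_, _, _, h01, h02, h12, rfl⟩, ?_⟩
    intro u hu v hv huv
    simp only [Finset.mem_insert, Finset.mem_singleton] at hu hv
    rcases hu with rfl|rfl|rfl <;> rcases hv with rfl|rfl|rfl <;>
      first | exact absurd rfl huv | omega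
  · rintro ⟨a,b,c,d,e, hab,hac,had,hae,hbc,hbd,hbe,hcd,hce,hde, e1,e2,e3,e4⟩
    rw [hF, Finset.mem_filter] at e1 e2 e4
    have p1 := e1.2.2 a (by simp) b (by simp) hab
    have p2 := e1.2.2 a (by simp) c (by simp) hac
    have p3 := e1.2.2 b (by simp) c (by simp) hbc
    have p4 := e2.2.2 b (by simp) d (by simp) hbd
    have p5 := e2.2.2 c (by simp) d (by simp) hcd
    have p6 := e4.2.2 d (by simp) a (by simp) had.symm
    omega
  · intro u v hne
    obtain ⟨w0, hw0⟩ := hne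
    rw [mem_link] at hw0
    have huv : u ≠ v := (edge_ne hEF hw0).1
    have hprop := hw0
    rw [hF, Finset.mem_filter] at hprop
    have hcuv : (u:ℕ) % 3 ≠ (v:ℕ) % 3 :=
      hprop.2.2 u (by simp) v (by simp) huv
    have hsub : Finset.univ.filter
        (fun w : Fin n => (w:ℕ) % 3 = 3 - (u:ℕ) % 3 - (v:ℕ) % 3) ⊆ link F u v := by
      intro w hw
      rw [Finset.mem_filter] at hw
      obtain ⟨-, hw3⟩ := hw
      have hwu : w ≠ u := by rintro rfl; omega
      have hwv : w ≠ v := by rintro rfl; omega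
      rw [mem_link, hF, Finset.mem_filter]
      refine ⟨Finset.mem_univ _,
        Finset.card_eq_three.mpr ⟨u, v, w, huv, Ne.symm hwu, Ne.symm hwv, rfl⟩, ?_⟩
      intro p hp q hq hpq
      simp only [Finset.mem_insert, Finset.mem_singleton] at hp hq
      rcases hp with rfl|rfl|rfl <;> rcases hq with rfl|rfl|rfl <;>
        first | exact absurd rfl hpq | omega
    calc n/3 ≤ (Finset.univ.filter
        (fun w : Fin n => (w:ℕ) % 3 = 3 - (u:ℕ) % 3 - (v:ℕ) % 3)).card :=
          class_card n _ (by omega) (by omega)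
      _ ≤ (link F u v).card := Finset.card_le_card hsub


/-- for `n ≥ 6`, `co⁺ex(n, C5⁻) = ⌊n/3⌋`: the maximum of the minimum
positive co-degree over all `n`-vertex `C5⁻`-free non-empty 3-graphs is `⌊n/3⌋`. -/
theorem stmt_2 (n : ℕ) (hn : 6 ≤ n) :
    (∃ E : Finset (Finset (Fin n)), isEdgeSet E ∧ E.Nonempty ∧ ¬ hasC5minus E ∧
      ∀ u v : Fin n, (link E u v).Nonempty → n / 3 ≤ (link E u v).card) ∧
    (∀ E : Finset (Finset (Fin n)), isEdgeSet E → E.Nonempty → ¬ hasC5minus E →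
      ∃ u v : Fin n, (link E u v).Nonempty ∧ (link E u v).card ≤ n / 3) := by
  constructor
  · exact construction n hn
  · intro E hE hne h5
    by_contra hcon
    push_neg at hcon
    exact upper_false hn hE hne h5 (fun u v h => hcon u v h)
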